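/- Let S_n be the simple symmetric random walk, A_n = ∑_{k≤n} S_k, and Ω_n^+ = {A_j ≥ 0, 1 ≤ j ≤ n}. Then for every positive integer R, P({max_{0≤k≤n} S_k ≥ R} ∩ Ω_n^+) ≤ 2 P({S_n ≥ R} ∩ Ω_n^+). -/

import Mathlib

open MeasureTheory ProbabilityTheory Finset
open scoped ENNReal

namespace MaxRefl

/-- Partial sums of a step sequence. -/
def ps (x : ℕ → ℤ) (k : ℕ) : ℤ := ∑ i ∈ Finset.Icc 1 k, x i

/-- Integrated walk of a step sequence. -/
def aps (x : ℕ → ℤ) (j : ℕ) : ℤ := ∑ i ∈ Finset.Icc 1 j, ps x i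

/-- `x` is a `±1` sequence on `[1, n]`, zero elsewhere. -/
def isSign (n : ℕ) (x : ℕ → ℤ) : Prop :=
  ∀ i, (i ∈ Finset.Icc 1 n → x i = 1 ∨ x i = -1) ∧ (i ∉ Finset.Icc 1 n → x i = 0)

lemma ps_zero (x : ℕ → ℤ) : ps x 0 = 0 := by simp [ps]

lemma ps_succ (x : ℕ → ℤ) (k : ℕ) : ps x (k + 1) = ps x k + x (k + 1) :=
  Finset.sum_Icc_succ_top (by omega) x

lemma sign_abs {n : ℕ} {x : ℕ → ℤ} (hx : isSign n x) {i : ℕ} (h1 : 1 ≤ i) (h2 : i ≤ n) :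
    x i = 1 ∨ x i = -1 := (hx i).1 (Finset.mem_Icc.2 ⟨h1, h2⟩)

/-- Discrete intermediate value theorem for sequences with upward steps at most 1. -/
lemma ivt (f : ℕ → ℤ) (r : ℤ) (a : ℕ) :
    ∀ b, a ≤ b → (∀ k, a ≤ k → k < b → f (k + 1) ≤ f k + 1) →
      f a ≤ r → r ≤ f b → ∃ k, a ≤ k ∧ k ≤ b ∧ f k = r := by
  intro b
  induction b with
  | zero =>
    intro hab _ h1 h2
    have ha : a = 0 := by omega
    subst ha
    exact ⟨0, le_rfl, le_rfl, by omega⟩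
  | succ b ih =>
    intro hab hstep h1 h2
    by_cases hab' : a ≤ b
    · by_cases hr : r ≤ f b
      · obtain ⟨k, hk1, hk2, hk3⟩ := ih hab' (fun k u v => hstep k u (by omega)) h1 hr
        exact ⟨k, hk1, by omega, hk3⟩
      · have h3 := hstep b hab' (by omega)
        exact ⟨b + 1, by omega, le_rfl, by omega⟩
    · have ha : a = b + 1 := by omega
      subst ha
      exact ⟨b + 1, le_rfl, le_rfl, by omega⟩

lemma exists_hit {n : ℕ} {r : ℤ} {x : ℕ → ℤ} (hx : isSign n x) (hr : 1 ≤ r)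
    (hhit : ∃ k ≤ n, r ≤ ps x k) : ∃ k ≤ n, ps x k = r := by
  obtain ⟨k, hk, hrk⟩ := hhit
  obtain ⟨j, _, hj2, hj3⟩ := ivt (ps x) r 0 k (Nat.zero_le _)
    (fun m _ hm => by
      have := sign_abs hx (i := m + 1) (by omega) (by omega)
      rw [ps_succ]; omega)
    (by rw [ps_zero]; omega) hrk
  exact ⟨j, by omega, hj3⟩

/-- The last time `≤ n` the partial sums hit `r` (or `0`). -/
def sig (n : ℕ) (r : ℤ) (x : ℕ → ℤ) : ℕ := Nat.findGreatest (fun k => ps x k = r) n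

lemma sig_le (n : ℕ) (r : ℤ) (x : ℕ → ℤ) : sig n r x ≤ n := Nat.findGreatest_le n

lemma sig_spec' {n : ℕ} {r : ℤ} {x : ℕ → ℤ} (k : ℕ) (hk : k ≤ n) (h : ps x k = r) :
    ps x (sig n r x) = r := by
  unfold sig
  exact Nat.findGreatest_spec (P := fun k => ps x k = r) hk h

lemma sig_greatest {n : ℕ} {r : ℤ} {x : ℕ → ℤ} (k : ℕ) (h1 : sig n r x < k) (h2 : k ≤ n) :
    ps x k ≠ r := by
  unfold sig at h1
  exact Nat.findGreatest_is_greatest h1 h2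

lemma le_sig {n : ℕ} {r : ℤ} {x : ℕ → ℤ} (k : ℕ) (hk : k ≤ n) (h : ps x k = r) :
    k ≤ sig n r x := by
  unfold sig
  exact Nat.le_findGreatest hk h

lemma ps_sig {n : ℕ} {r : ℤ} {x : ℕ → ℤ} (hx : isSign n x) (hr : 1 ≤ r)
    (hhit : ∃ k ≤ n, r ≤ ps x k) : ps x (sig n r x) = r := by
  obtain ⟨k, hk, hk2⟩ := exists_hit hx hr hhit
  exact sig_spec' k hk hk2

lemma below_after {n : ℕ} {r : ℤ} {x : ℕ → ℤ} (hx : isSign n x) (hr : 1 ≤ r)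
    (hhit : ∃ k ≤ n, r ≤ ps x k) (hn : ps x n < r) :
    ∀ i, sig n r x < i → i ≤ n → ps x i < r := by
  intro i hi1 hi2
  by_contra hcon
  push_neg at hcon
  obtain ⟨j, hj1, hj2, hj3⟩ := ivt (fun k => -ps x k) (-r) i n hi2
    (fun m hm1 hm2 => by
      have := sign_abs hx (i := m + 1) (by omega) (by omega)
      show -ps x (m + 1) ≤ -ps x m + 1
      rw [ps_succ]; omega)
    (show -ps x i ≤ -r by omega) (show -r ≤ -ps x n by omega)
  have hj3' : -ps x j = -r := hj3
  have hlt : sig n r x < j := by omega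
  exact sig_greatest j hlt hj2 (by omega)

/-- Reflection of the steps after the last hit of `r`. -/
def reflect (n : ℕ) (r : ℤ) (x : ℕ → ℤ) (i : ℕ) : ℤ :=
  if sig n r x < i ∧ i ≤ n then -x i else x i

lemma Icc_one_eq_Ioc (k : ℕ) : Finset.Icc 1 k = Finset.Ioc 0 k := Finset.Icc_add_one_left_eq_Ioc 0 k

lemma ps_split (y : ℕ → ℤ) {a k : ℕ} (h : a ≤ k) :
    ps y k = ps y a + ∑ i ∈ Finset.Ioc a k, y i := by
  unfold ps
  rw [Icc_one_eq_Ioc, Icc_one_eq_Ioc]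
  exact (Finset.sum_Ioc_consecutive y (Nat.zero_le a) h).symm

lemma ps_reflect_of_le {n : ℕ} {r : ℤ} {x : ℕ → ℤ} (k : ℕ) (hk : k ≤ sig n r x) :
    ps (reflect n r x) k = ps x k := by
  unfold ps
  refine Finset.sum_congr rfl fun i hi => ?_
  rw [Finset.mem_Icc] at hi
  unfold reflect
  rw [if_neg (by omega)]

lemma ps_reflect_of_ge {n : ℕ} {r : ℤ} {x : ℕ → ℤ} (k : ℕ)
    (h1 : sig n r x ≤ k) (h2 : k ≤ n) :
    ps (reflect n r x) k = 2 * ps x (sig n r x) - ps x k := by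
  have e1 := ps_split (reflect n r x) h1
  have e2 := ps_split x h1
  have e3 : ∑ i ∈ Finset.Ioc (sig n r x) k, reflect n r x i
      = -∑ i ∈ Finset.Ioc (sig n r x) k, x i := by
    rw [← Finset.sum_neg_distrib]
    refine Finset.sum_congr rfl fun i hi => ?_
    rw [Finset.mem_Ioc] at hi
    unfold reflect
    rw [if_pos ⟨hi.1, le_trans hi.2 h2⟩]
  rw [ps_reflect_of_le (sig n r x) le_rfl] at e1
  omega

lemma ps_reflect_ge {n : ℕ} {r : ℤ} {x : ℕ → ℤ} (hx : isSign n x) (hr : 1 ≤ r)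
    (hhit : ∃ k ≤ n, r ≤ ps x k) (hn : ps x n < r) :
    ∀ i, i ≤ n → ps x i ≤ ps (reflect n r x) i := by
  intro i hi
  rcases le_or_gt i (sig n r x) with h | h
  · rw [ps_reflect_of_le i h]
  · have := below_after hx hr hhit hn i h hi
    rw [ps_reflect_of_ge i (le_of_lt h) hi, ps_sig hx hr hhit]
    omega

lemma ps_reflect_n {n : ℕ} {r : ℤ} {x : ℕ → ℤ} (hx : isSign n x) (hr : 1 ≤ r)
    (hhit : ∃ k ≤ n, r ≤ ps x k) (hn : ps x n < r) :
    r ≤ ps (reflect n r x) n := by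
  rw [ps_reflect_of_ge n (sig_le n r x) le_rfl, ps_sig hx hr hhit]
  omega

lemma reflect_isSign {n : ℕ} {r : ℤ} {x : ℕ → ℤ} (hx : isSign n x) :
    isSign n (reflect n r x) := by
  intro i
  constructor
  · intro hi
    have := (hx i).1 hi
    unfold reflect
    split_ifs <;> omega
  · intro hi
    have h0 := (hx i).2 hi
    rw [Finset.mem_Icc] at hi
    push_neg at hi
    unfold reflect
    split_ifs with h
    · omega
    · exact h0

lemma aps_reflect {n : ℕ} {r : ℤ} {x : ℕ → ℤ} (hx : isSign n x) (hr : 1 ≤ r)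
    (hhit : ∃ k ≤ n, r ≤ ps x k) (hn : ps x n < r) (j : ℕ) (hj : j ≤ n) :
    aps x j ≤ aps (reflect n r x) j := by
  unfold aps
  refine Finset.sum_le_sum fun i hi => ?_
  rw [Finset.mem_Icc] at hi
  exact ps_reflect_ge hx hr hhit hn i (le_trans hi.2 hj)

lemma sig_reflect {n : ℕ} {r : ℤ} {x : ℕ → ℤ} (hx : isSign n x) (hr : 1 ≤ r)
    (hhit : ∃ k ≤ n, r ≤ ps x k) (hn : ps x n < r) :
    sig n r (reflect n r x) = sig n r x := by
  have hps : ps (reflect n r x) (sig n r x) = r := by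
    rw [ps_reflect_of_le _ le_rfl]; exact ps_sig hx hr hhit
  apply le_antisymm
  · by_contra hcon
    push_neg at hcon
    have h2 : sig n r (reflect n r x) ≤ n := sig_le _ _ _
    have h3 : ps (reflect n r x) (sig n r (reflect n r x)) = r :=
      sig_spec' (sig n r x) (sig_le n r x) hps
    rw [ps_reflect_of_ge _ (le_of_lt hcon) h2, ps_sig hx hr hhit] at h3
    exact sig_greatest _ hcon h2 (by omega)
  · exact le_sig _ (sig_le n r x) hps

lemma reflect_reflect {n : ℕ} {r : ℤ} {x : ℕ → ℤ} (hx : isSign n x) (hr : 1 ≤ r)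
    (hhit : ∃ k ≤ n, r ≤ ps x k) (hn : ps x n < r) :
    reflect n r (reflect n r x) = x := by
  have hs := sig_reflect hx hr hhit hn
  funext i
  simp only [reflect, hs]
  split_ifs with h <;> simp

/-- Extension of a `Fin n` tuple to a sequence supported on `[1, n]`. -/
def ext (n : ℕ) (y : Fin n → ℤ) (i : ℕ) : ℤ :=
  if h : 1 ≤ i ∧ i ≤ n then y ⟨i - 1, by omega⟩ else 0

open Classical in
/-- The finset of all sign sequences. -/
noncomputable def signs (n : ℕ) : Finset (ℕ → ℤ) :=
  (Fintype.piFinset fun _ : Fin n => ({1, -1} : Finset ℤ)).image (ext n)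

lemma mem_signs {n : ℕ} {x : ℕ → ℤ} : x ∈ signs n ↔ isSign n x := by
  classical
  constructor
  · intro hx
    unfold signs at hx
    rw [Finset.mem_image] at hx
    obtain ⟨y, hy, rfl⟩ := hx
    rw [Fintype.mem_piFinset] at hy
    intro i
    constructor
    · intro hi
      rw [Finset.mem_Icc] at hi
      have := hy ⟨i - 1, by omega⟩
      simp only [Finset.mem_insert, Finset.mem_singleton] at this
      unfold ext
      rw [dif_pos hi]
      exact this
    · intro hi
      rw [Finset.mem_Icc] at hi
      unfold ext
      rw [dif_neg hi]
  · intro hx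
    unfold signs
    rw [Finset.mem_image]
    refine ⟨fun j => x (j + 1), ?_, ?_⟩
    · rw [Fintype.mem_piFinset]
      intro j
      have hj := j.isLt
      have := (hx (j + 1)).1 (Finset.mem_Icc.2 ⟨by omega, by omega⟩)
      simp only [Finset.mem_insert, Finset.mem_singleton]
      exact this
    · funext i
      unfold ext
      split_ifs with h
      · show x (i - 1 + 1) = x i
        congr 1
        omega
      · exact ((hx i).2 (by rw [Finset.mem_Icc]; omega)).symm

/-- Sign sequences whose max partial sum reaches `R` and whose integrated walk stays `≥ 0`. -/
noncomputable def good1 (n R : ℕ) : Finset (ℕ → ℤ) :=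
  @Finset.filter _
    (fun x => (∃ k ≤ n, (R : ℤ) ≤ ps x k) ∧ ∀ j ∈ Finset.Icc 1 n, 0 ≤ aps x j)
    (fun _ => Classical.propDecidable _) (signs n)

/-- Sign sequences whose final partial sum is `≥ R` and whose integrated walk stays `≥ 0`. -/
noncomputable def good2 (n R : ℕ) : Finset (ℕ → ℤ) :=
  @Finset.filter _
    (fun x => ((R : ℤ) ≤ ps x n) ∧ ∀ j ∈ Finset.Icc 1 n, 0 ≤ aps x j)
    (fun _ => Classical.propDecidable _) (signs n)

lemma mem_good1 {n R : ℕ} {x : ℕ → ℤ} :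
    x ∈ good1 n R ↔ isSign n x ∧
      (∃ k ≤ n, (R : ℤ) ≤ ps x k) ∧ ∀ j ∈ Finset.Icc 1 n, 0 ≤ aps x j := by
  have h := @Finset.mem_filter (ℕ → ℤ)
    (fun x => (∃ k ≤ n, (R : ℤ) ≤ ps x k) ∧ ∀ j ∈ Finset.Icc 1 n, 0 ≤ aps x j)
    (fun _ => Classical.propDecidable _) (signs n) x
  rw [mem_signs] at h
  exact h

lemma mem_good2 {n R : ℕ} {x : ℕ → ℤ} :
    x ∈ good2 n R ↔ isSign n x ∧
      ((R : ℤ) ≤ ps x n) ∧ ∀ j ∈ Finset.Icc 1 n, 0 ≤ aps x j := by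
  have h := @Finset.mem_filter (ℕ → ℤ)
    (fun x => ((R : ℤ) ≤ ps x n) ∧ ∀ j ∈ Finset.Icc 1 n, 0 ≤ aps x j)
    (fun _ => Classical.propDecidable _) (signs n) x
  rw [mem_signs] at h
  exact h

/-- The key counting inequality. -/
lemma card_good (n R : ℕ) (hR : 1 ≤ R) : (good1 n R).card ≤ 2 * (good2 n R).card := by
  classical
  have hr : (1 : ℤ) ≤ (R : ℤ) := by exact_mod_cast hR
  have hsplit : ((good1 n R).filter (fun x => (R : ℤ) ≤ ps x n)).card
      + ((good1 n R).filter (fun x => ¬(R : ℤ) ≤ ps x n)).card = (good1 n R).card :=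
    Finset.card_filter_add_card_filter_not
      (s := good1 n R) (p := fun x => (R : ℤ) ≤ ps x n)
  have ha : (good1 n R).filter (fun x => (R : ℤ) ≤ ps x n) ⊆ good2 n R := by
    intro x hx
    rw [Finset.mem_filter, mem_good1] at hx
    exact mem_good2.2 ⟨hx.1.1, hx.2, hx.1.2.2⟩
  have hacard := Finset.card_le_card ha
  have hb : ((good1 n R).filter (fun x => ¬(R : ℤ) ≤ ps x n)).card ≤ (good2 n R).card := by
    apply Finset.card_le_card_of_injOn (reflect n (R : ℤ))
    · intro x hx
      rw [Finset.mem_coe, Finset.mem_filter, mem_good1] at hx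
      obtain ⟨⟨hxs, hhit, hpos⟩, hlt⟩ := hx
      push_neg at hlt
      refine mem_good2.2 ⟨reflect_isSign hxs, ps_reflect_n hxs hr hhit hlt, ?_⟩
      intro j hj
      have hj' := Finset.mem_Icc.1 hj
      exact le_trans (hpos j hj) (aps_reflect hxs hr hhit hlt j hj'.2)
    · intro x hx y hy hxy
      rw [Finset.mem_coe, Finset.mem_filter, mem_good1] at hx hy
      obtain ⟨⟨hxs, hhitx, _⟩, hltx⟩ := hx
      obtain ⟨⟨hys, hhity, _⟩, hlty⟩ := hy
      push_neg at hltx hlty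
      calc x = reflect n (R : ℤ) (reflect n (R : ℤ) x) :=
            (reflect_reflect hxs hr hhitx hltx).symm
        _ = reflect n (R : ℤ) (reflect n (R : ℤ) y) := by rw [hxy]
        _ = y := reflect_reflect hys hr hhity hlty
  omega

end MaxRefl

/-- For the simple symmetric random walk `S`, integrated walk `A`, and
`Ω_n^+ = {A_1 ≥ 0, …, A_n ≥ 0}`, for every integer `R ≥ 1`,
`P({max_{0≤k≤n} S_k ≥ R} ∩ Ω_n^+) ≤ 2 P({S_n ≥ R} ∩ Ω_n^+)`. -/
theorem max_reflection_bound
    {Ω : Type*} [MeasureSpace Ω] [IsProbabilityMeasure (ℙ : Measure Ω)]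
    (X : ℕ → Ω → ℤ) (hmeas : ∀ i, Measurable (X i))
    (hindep : iIndepFun X ℙ)
    (hdist : ∀ i, ℙ {ω | X i ω = 1} = 1/2 ∧ ℙ {ω | X i ω = -1} = 1/2)
    (S A : ℕ → Ω → ℤ)
    (hS : ∀ n ω, S n ω = ∑ i ∈ Finset.Icc 1 n, X i ω)
    (hA : ∀ n ω, A n ω = ∑ i ∈ Finset.Icc 1 n, S i ω)
    (n : ℕ) (R : ℕ) (hR : 1 ≤ R) :
    ℙ ({ω | ∃ k ≤ n, (R : ℤ) ≤ S k ω} ∩ {ω | ∀ j ∈ Finset.Icc 1 n, 0 ≤ A j ω})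
      ≤ 2 * ℙ ({ω | (R : ℤ) ≤ S n ω} ∩ {ω | ∀ j ∈ Finset.Icc 1 n, 0 ≤ A j ω}) := by
  classical
  -- the atoms
  set E : (ℕ → ℤ) → Set Ω := fun x => ⋂ i ∈ Finset.Icc 1 n, X i ⁻¹' {x i} with hE
  have hEmeas : ∀ x, MeasurableSet (E x) := fun x =>
    MeasurableSet.biInter (Finset.Icc 1 n).countable_toSet
      (fun i _ => (hmeas i) (measurableSet_singleton _))
  have hatom : ∀ x, MaxRefl.isSign n x → ℙ (E x) = (1 / 2 : ℝ≥0∞) ^ n := by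
    intro x hx
    have hprod := hindep.measure_inter_preimage_eq_mul (Finset.Icc 1 n)
      (sets := fun i => {x i}) (fun i _ => measurableSet_singleton _)
    have hEx : E x = ⋂ i ∈ Finset.Icc 1 n, X i ⁻¹' {x i} := rfl
    rw [hEx, hprod]
    have hfac : ∀ i ∈ Finset.Icc 1 n, ℙ (X i ⁻¹' {x i}) = (1 / 2 : ℝ≥0∞) := by
      intro i hi
      rcases (hx i).1 hi with h | h <;> rw [h]
      · exact (hdist i).1
      · exact (hdist i).2
    rw [Finset.prod_congr rfl hfac, Finset.prod_const, Nat.card_Icc]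
    norm_num
  -- the a.s. set where all steps are ±1
  set N : Set Ω := ⋂ i ∈ Finset.Icc 1 n, {ω | X i ω = 1 ∨ X i ω = -1} with hN
  have hNi : ∀ i : ℕ, ℙ {ω | X i ω = 1 ∨ X i ω = -1} = 1 := by
    intro i
    have hset : {ω | X i ω = 1 ∨ X i ω = -1}
        = {ω | X i ω = 1} ∪ {ω | X i ω = (-1 : ℤ)} := rfl
    have hd : Disjoint {ω | X i ω = 1} {ω | X i ω = (-1 : ℤ)} := by
      rw [Set.disjoint_left]
      intro ω h1 h2
      simp only [Set.mem_setOf_eq] at h1 h2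
      omega
    rw [hset, measure_union hd ((hmeas i) (measurableSet_singleton (-1 : ℤ))),
      (hdist i).1, (hdist i).2]
    rw [← ENNReal.add_halves 1]
    norm_num
  have hNcompl : ℙ Nᶜ = 0 := by
    rw [hN, Set.compl_iInter₂]
    refine le_antisymm (le_trans (measure_biUnion_finset_le _ _) ?_) zero_le
    refine le_of_eq (Finset.sum_eq_zero fun i _ => ?_)
    have hm : MeasurableSet {ω | X i ω = 1 ∨ X i ω = -1} :=
      ((hmeas i) (measurableSet_singleton (1 : ℤ))).union
        ((hmeas i) (measurableSet_singleton (-1 : ℤ)))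
    rw [measure_compl hm (measure_ne_top _ _), hNi i, measure_univ, tsub_self]
  -- translation from the walk to sign sequences
  have hSps : ∀ (x : ℕ → ℤ) (ω : Ω), (∀ i ∈ Finset.Icc 1 n, X i ω = x i) →
      ∀ k, k ≤ n → S k ω = MaxRefl.ps x k := by
    intro x ω hω k hk
    rw [hS]
    refine Finset.sum_congr rfl fun i hi => ?_
    rw [Finset.mem_Icc] at hi
    exact hω i (Finset.mem_Icc.2 ⟨hi.1, le_trans hi.2 hk⟩)
  have hAas : ∀ (x : ℕ → ℤ) (ω : Ω), (∀ i ∈ Finset.Icc 1 n, X i ω = x i) →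
      ∀ j, j ≤ n → A j ω = MaxRefl.aps x j := by
    intro x ω hω j hj
    rw [hA]
    refine Finset.sum_congr rfl fun i hi => ?_
    rw [Finset.mem_Icc] at hi
    exact hSps x ω hω i (le_trans hi.2 hj)
  -- generic decomposition of a sign-determined event
  have hdecomp : ∀ (Φ : (ℕ → ℤ) → Prop) (G : Finset (ℕ → ℤ)) (T : Set Ω),
      (∀ x, x ∈ G ↔ MaxRefl.isSign n x ∧ Φ x) →
      (∀ x, MaxRefl.isSign n x → ∀ ω, (∀ i ∈ Finset.Icc 1 n, X i ω = x i) →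
        (ω ∈ T ↔ Φ x)) →
      ℙ T = (G.card : ℝ≥0∞) * (1 / 2 : ℝ≥0∞) ^ n := by
    intro Φ G T hGmem hc
    have hTN : T ∩ N = ⋃ x ∈ G, E x := by
      ext ω
      simp only [Set.mem_inter_iff, Set.mem_iUnion, exists_prop]
      constructor
      · rintro ⟨hT, hωN⟩
        set x : ℕ → ℤ := fun i => if i ∈ Finset.Icc 1 n then X i ω else 0 with hxdef
        have hxe : ∀ i ∈ Finset.Icc 1 n, X i ω = x i := by
          intro i hi
          rw [hxdef]
          simp [hi]
        have hxsign : MaxRefl.isSign n x := by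
          intro i
          constructor
          · intro hi
            rw [hxdef]
            simp only [if_pos hi]
            exact Set.mem_iInter₂.1 hωN i hi
          · intro hi
            rw [hxdef]
            simp [hi]
        refine ⟨x, hGmem x |>.2 ⟨hxsign, (hc x hxsign ω hxe).1 hT⟩, ?_⟩
        exact Set.mem_iInter₂.2 fun i hi => by
          rw [Set.mem_preimage, Set.mem_singleton_iff]
          exact hxe i hi
      · rintro ⟨x, hxG, hωE⟩
        obtain ⟨hxsign, hΦ⟩ := (hGmem x).1 hxG
        have hxe : ∀ i ∈ Finset.Icc 1 n, X i ω = x i := fun i hi => by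
          have := Set.mem_iInter₂.1 hωE i hi
          rwa [Set.mem_preimage, Set.mem_singleton_iff] at this
        refine ⟨(hc x hxsign ω hxe).2 hΦ, Set.mem_iInter₂.2 fun i hi => ?_⟩
        show X i ω = 1 ∨ X i ω = -1
        rw [hxe i hi]
        exact (hxsign i).1 hi
    have h1 : ℙ T = ℙ (T ∩ N) := by
      apply measure_congr
      rw [MeasureTheory.ae_eq_set]
      constructor
      · refine measure_mono_null (fun ω hω => ?_) hNcompl
        exact fun hωN => hω.2 ⟨hω.1, hωN⟩
      · refine measure_mono_null (fun ω hω => ?_) hNcompl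
        exact absurd hω.1.1 hω.2
    have hdisj : Set.PairwiseDisjoint (↑G : Set (ℕ → ℤ)) E := by
      intro x hx y hy hxy
      rw [Finset.mem_coe] at hx hy
      have hx' := ((hGmem x).1 hx).1
      have hy' := ((hGmem y).1 hy).1
      rw [Function.onFun, Set.disjoint_left]
      intro ω hωx hωy
      apply hxy
      funext i
      by_cases hi : i ∈ Finset.Icc 1 n
      · have h1 := Set.mem_iInter₂.1 hωx i hi
        have h2 := Set.mem_iInter₂.1 hωy i hi
        rw [Set.mem_preimage, Set.mem_singleton_iff] at h1 h2
        rw [← h1, ← h2]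
      · rw [(hx' i).2 hi, (hy' i).2 hi]
    rw [h1, hTN, measure_biUnion_finset hdisj (fun x _ => hEmeas x)]
    rw [Finset.sum_congr rfl (fun x hx => hatom x ((hGmem x).1 hx).1),
      Finset.sum_const, nsmul_eq_mul]
  -- apply to the two events
  have hP1 : ℙ ({ω | ∃ k ≤ n, (R : ℤ) ≤ S k ω} ∩ {ω | ∀ j ∈ Finset.Icc 1 n, 0 ≤ A j ω})
      = ((MaxRefl.good1 n R).card : ℝ≥0∞) * (1 / 2 : ℝ≥0∞) ^ n := by
    refine hdecomp _ _ _ (fun x => MaxRefl.mem_good1) ?_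
    intro x hx ω hω
    simp only [Set.mem_inter_iff, Set.mem_setOf_eq]
    constructor
    · rintro ⟨⟨k, hk, hSk⟩, hB⟩
      refine ⟨⟨k, hk, by rwa [hSps x ω hω k hk] at hSk⟩, fun j hj => ?_⟩
      rw [← hAas x ω hω j (Finset.mem_Icc.1 hj).2]
      exact hB j hj
    · rintro ⟨⟨k, hk, hSk⟩, hB⟩
      refine ⟨⟨k, hk, by rwa [hSps x ω hω k hk]⟩, fun j hj => ?_⟩
      rw [hAas x ω hω j (Finset.mem_Icc.1 hj).2]
      exact hB j hj
  have hP2 : ℙ ({ω | (R : ℤ) ≤ S n ω} ∩ {ω | ∀ j ∈ Finset.Icc 1 n, 0 ≤ A j ω})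
      = ((MaxRefl.good2 n R).card : ℝ≥0∞) * (1 / 2 : ℝ≥0∞) ^ n := by
    refine hdecomp _ _ _ (fun x => MaxRefl.mem_good2) ?_
    intro x hx ω hω
    simp only [Set.mem_inter_iff, Set.mem_setOf_eq]
    constructor
    · rintro ⟨hSk, hB⟩
      refine ⟨by rwa [hSps x ω hω n le_rfl] at hSk, fun j hj => ?_⟩
      rw [← hAas x ω hω j (Finset.mem_Icc.1 hj).2]
      exact hB j hj
    · rintro ⟨hSk, hB⟩
      refine ⟨by rwa [hSps x ω hω n le_rfl], fun j hj => ?_⟩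
      rw [hAas x ω hω j (Finset.mem_Icc.1 hj).2]
      exact hB j hj
  rw [hP1, hP2]
  have hcard := MaxRefl.card_good n R hR
  calc ((MaxRefl.good1 n R).card : ℝ≥0∞) * (1 / 2 : ℝ≥0∞) ^ n
      ≤ ((2 * (MaxRefl.good2 n R).card : ℕ) : ℝ≥0∞) * (1 / 2 : ℝ≥0∞) ^ n :=
        mul_le_mul_left (by exact_mod_cast hcard) _
    _ = 2 * (((MaxRefl.good2 n R).card : ℝ≥0∞) * (1 / 2 : ℝ≥0∞) ^ n) := by
        push_cast
        ring
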